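/- For the state ρ = a|ψ⁺⟩⟨ψ⁺| + (1−a)|11⟩⟨11| with a = 1/2, and for any orthonormal basis {|χ_1⟩, |χ_2⟩} of span{|ψ⁺⟩, |11⟩}, the average concurrence (1/2)(C(|χ_1⟩) + C(|χ_2⟩)) equals 1/2, where the concurrence of a two-qubit pure state |χ⟩ = Σ c_{ij}|ij⟩ is C(|χ⟩) = 2|c_{00}c_{11} − c_{01}c_{10}|. -/

import Mathlib

open Matrix
open scoped ComplexOrder

/-- Rank-one projector |v⟩⟨v|. -/
noncomputable def proj {n : Type*} (v : n → ℂ) : Matrix n n ℂ :=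
  Matrix.vecMulVec v (star v)

/-- Tensor product of vectors. -/
noncomputable def tens {a b : Type*} (v : a → ℂ) (w : b → ℂ) : a × b → ℂ :=
  fun p => v p.1 * w p.2

/-- Hermitian inner product ⟨u|v⟩. -/
noncomputable def inner' {n : Type*} [Fintype n] (u v : n → ℂ) : ℂ :=
  dotProduct (star u) v

/-- Square root of a positive semidefinite matrix, as formerly defined in Mathlib
(`Matrix.PosSemidef.sqrt`, since removed). -/
noncomputable def Matrix.PosSemidef.sqrt {n 𝕜 : Type*} [Fintype n] [DecidableEq n] [RCLike 𝕜]
    {A : Matrix n n 𝕜} (hA : A.PosSemidef) : Matrix n n 𝕜 :=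
  (hA.isHermitian.eigenvectorUnitary : Matrix n n 𝕜) *
    diagonal (fun i => ((Real.sqrt (hA.isHermitian.eigenvalues i) : ℝ) : 𝕜)) *
    (star hA.isHermitian.eigenvectorUnitary : Matrix n n 𝕜)

open Classical in
/-- Uhlmann fidelity Tr √(√ρ σ √ρ) (0 if inputs are not positive semidefinite). -/
noncomputable def fid {n : Type*} [Fintype n] [DecidableEq n]
    (ρ σ : Matrix n n ℂ) : ℝ :=
  if h : ρ.PosSemidef ∧ σ.PosSemidef then
    ((h.2.mul_mul_conjTranspose_same h.1.sqrt).sqrt).trace.re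
  else 0

/-- Partial trace over the second subsystem. -/
noncomputable def ptraceB {a b : Type*} [Fintype b] (M : Matrix (a × b) (a × b) ℂ) : Matrix a a ℂ :=
  fun i j => ∑ k, M (i, k) (j, k)

/-- Partial trace over the first subsystem. -/
noncomputable def ptraceA {a b : Type*} [Fintype a] (M : Matrix (a × b) (a × b) ℂ) : Matrix b b ℂ :=
  fun i j => ∑ k, M (k, i) (k, j)


/-- Standard basis of ℂ². -/
noncomputable def e (i : Fin 2) : Fin 2 → ℂ := fun j => if j = i then 1 else 0

/-- The Bell state |ψ⁺⟩ = (|01⟩ + |10⟩)/√2. -/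
noncomputable def psiPlus : Fin 2 × Fin 2 → ℂ :=
  ((Real.sqrt 2 : ℂ))⁻¹ • (tens (e 0) (e 1) + tens (e 1) (e 0))

/-- Concurrence of a two-qubit pure state written in the standard product basis. -/
noncomputable def concur (χ : Fin 2 × Fin 2 → ℂ) : ℝ :=
  2 * ‖χ (0, 0) * χ (1, 1) - χ (0, 1) * χ (1, 0)‖

theorem stmt16 (χ₁ χ₂ : Fin 2 × Fin 2 → ℂ)
    (h11 : inner' χ₁ χ₁ = 1) (h22 : inner' χ₂ χ₂ = 1) (h12 : inner' χ₁ χ₂ = 0)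
    (hm1 : χ₁ ∈ Submodule.span ℂ ({psiPlus, tens (e 1) (e 1)} : Set (Fin 2 × Fin 2 → ℂ)))
    (hm2 : χ₂ ∈ Submodule.span ℂ ({psiPlus, tens (e 1) (e 1)} : Set (Fin 2 × Fin 2 → ℂ))) :
    (concur χ₁ + concur χ₂) / 2 = 1 / 2 := by
  rw [Submodule.mem_span_pair] at hm1 hm2
  obtain ⟨m, n, hχ₁⟩ := hm1
  obtain ⟨p, q, hχ₂⟩ := hm2
  subst hχ₁ hχ₂
  have hs : ((Real.sqrt 2 : ℂ))⁻¹ * ((Real.sqrt 2 : ℂ))⁻¹ = (1/2 : ℂ) := by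
    rw [← mul_inv]
    norm_cast
    rw [Real.mul_self_sqrt (by norm_num)]
    norm_num
  simp only [inner', dotProduct, Fintype.sum_prod_type, Fin.sum_univ_two,
    Pi.smul_apply, Pi.add_apply, Pi.star_apply, psiPlus, tens, e, smul_eq_mul,
    RCLike.star_def] at h11 h22 h12
  simp only [concur, psiPlus, tens, e, Pi.smul_apply, Pi.add_apply, smul_eq_mul]
  norm_num at h11 h22 h12 ⊢
  have h1 : (starRingEnd ℂ) m * m + (starRingEnd ℂ) n * n = 1 := by
    linear_combination h11 - 2 * (starRingEnd ℂ) m * m * hs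
  have h2 : (starRingEnd ℂ) p * p + (starRingEnd ℂ) q * q = 1 := by
    linear_combination h22 - 2 * (starRingEnd ℂ) p * p * hs
  have h3 : (starRingEnd ℂ) m * p = -((starRingEnd ℂ) n * q) := by
    linear_combination h12 - 2 * (starRingEnd ℂ) m * p * hs
  have habs : ‖m‖ * ‖p‖ = ‖n‖ * ‖q‖ := by
    have := congrArg (fun z : ℂ => ‖z‖) h3
    simpa [norm_mul, norm_neg, Complex.norm_conj] using this
  rw [← Complex.normSq_eq_conj_mul_self, ← Complex.normSq_eq_conj_mul_self] at h1 h2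
  have h1' : ‖m‖ ^ 2 + ‖n‖ ^ 2 = 1 := by
    rw [Complex.sq_norm, Complex.sq_norm]; exact_mod_cast h1
  have h2' : ‖p‖ ^ 2 + ‖q‖ ^ 2 = 1 := by
    rw [Complex.sq_norm, Complex.sq_norm]; exact_mod_cast h2
  have hab : |Real.sqrt 2| = Real.sqrt 2 := abs_of_nonneg (Real.sqrt_nonneg 2)
  have hsr : (Real.sqrt 2)⁻¹ * (Real.sqrt 2)⁻¹ = 1/2 := by
    rw [← mul_inv, Real.mul_self_sqrt (by norm_num)]; norm_num
  rw [hab]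
  have habs2 : (‖m‖ * ‖p‖) ^ 2 = (‖n‖ * ‖q‖) ^ 2 := by
    rw [habs]
  have key : ‖m‖ ^ 2 + ‖p‖ ^ 2 = 1 := by
    linear_combination habs2 + (1 - ‖p‖ ^ 2) * h1' + ‖n‖ ^ 2 * h2'
  linear_combination 2 * (‖m‖ ^ 2 + ‖p‖ ^ 2) * hsr + key
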